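/- Let l be a list of length n with entries in a type α, and suppose that every value occurs in l at most n/2 times (i.e. 2·(number of occurrences of v in l) ≤ n for each value v). Then there is a rearrangement (permutation) of l in which no two consecutive entries are equal. -/

import Mathlib

lemma count_add_count_le {α : Type*} [DecidableEq α] {b v : α} (h : b ≠ v) (l : List α) :
    l.count b + l.count v ≤ l.length := by
  induction l with
  | nil => simp
  | cons x xs ih =>
    simp only [List.count_cons, List.length_cons, beq_iff_eq]
    split_ifs with h1 h2
    · exact absurd (h1.symm.trans h2) h
    · omega
    · omega
    · omega

lemma key_lemma {α : Type*} [DecidableEq α] :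
    ∀ (n : ℕ) (l : List α) (a : α), l.length = n →
    (∀ v, 2 * l.count v ≤ n + 1) → 2 * l.count a ≤ n →
    ∃ l' : List α, l'.Perm l ∧ l'.Chain' (· ≠ ·) ∧ ∀ x ∈ l'.head?, x ≠ a := by
  intro n
  induction n using Nat.strong_induction_on with
  | _ n ih =>
    intro l a hlen hall ha
    rcases l with _ | ⟨x, xs⟩
    · exact ⟨[], List.Perm.nil, List.isChain_nil, by simp⟩
    · have hn1 : 1 ≤ n := by simp at hlen; omega
      -- there is an element different from a
      have hex : ∃ y ∈ (x :: xs), y ≠ a := by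
        by_contra hc
        push_neg at hc
        have : (x :: xs).count a = (x :: xs).length :=
          List.count_eq_length.2 (fun y hy => (hc y hy).symm)
        rw [hlen] at this
        omega
      have hs : ((x :: xs).toFinset.filter (· ≠ a)).Nonempty := by
        obtain ⟨y, hy, hya⟩ := hex
        exact ⟨y, Finset.mem_filter.2 ⟨List.mem_toFinset.2 hy, hya⟩⟩
      obtain ⟨b, hbs, hbmax⟩ :=
        Finset.exists_max_image _ (fun v => (x :: xs).count v) hs
      simp only [Finset.mem_filter, List.mem_toFinset] at hbs
      obtain ⟨hbl, hba⟩ := hbs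
      have hbcount : 1 ≤ (x :: xs).count b := List.count_pos_iff.2 hbl
      set rest := (x :: xs).erase b with hrest
      have hrlen : rest.length = n - 1 := by
        rw [hrest, List.length_erase_of_mem hbl, hlen]
      have hcount : ∀ v, rest.count v =
          (x :: xs).count v - if b = v then 1 else 0 := by
        intro v
        simpa using List.count_erase (a := v) (b := b) (l := x :: xs)
      have hrall : ∀ v, 2 * rest.count v ≤ (n - 1) + 1 := by
        intro v
        rw [hcount]
        by_cases hvb : b = v
        · rw [if_pos hvb]
          have := hall b
          rw [hvb] at this hbcount
          omega
        · rw [if_neg hvb]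
          by_cases hva : v = a
          · subst hva; omega
          · by_cases hvl : v ∈ (x :: xs)
            · have hvs : v ∈ (x :: xs).toFinset.filter (· ≠ a) :=
                Finset.mem_filter.2 ⟨List.mem_toFinset.2 hvl, hva⟩
              have h1 := hbmax v hvs
              have h2 := count_add_count_le hvb (x :: xs)
              rw [hlen] at h2
              omega
            · rw [List.count_eq_zero_of_not_mem hvl]; omega
      have hrb : 2 * rest.count b ≤ n - 1 := by
        rw [hcount, if_pos rfl]
        have := hall b
        omega
      obtain ⟨l'', hperm, hchain, hhead⟩ :=
        ih (n - 1) (by omega) rest b hrlen hrall hrb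
      refine ⟨b :: l'', ?_, ?_, ?_⟩
      · exact ((hperm.cons b).trans (List.perm_cons_erase hbl).symm)
      · exact List.isChain_cons.2 ⟨fun y hy => (hhead y hy).symm, hchain⟩
      · intro y hy
        simp only [List.head?_cons, Option.mem_def, Option.some.injEq] at hy
        exact hy ▸ hba

theorem stmt11 {α : Type*} [DecidableEq α] (l : List α)
    (h : ∀ v : α, 2 * l.count v ≤ l.length) :
    ∃ l' : List α, l'.Perm l ∧ l'.Chain' (· ≠ ·) := by
  rcases l with _ | ⟨x, xs⟩
  · exact ⟨[], List.Perm.nil, List.isChain_nil⟩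
  · obtain ⟨l', hp, hc, _⟩ := key_lemma (x :: xs).length (x :: xs) x rfl
      (fun v => le_trans (h v) (by omega)) (h x)
    exact ⟨l', hp, hc⟩
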